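/- Let X be a connected finite preordered set, R a 2-torsion free commutative ring with identity, and L a Lie derivation of I(X,R) with coefficients L(e_{ij}) = Σ_{x≤y} C^{ij}_{xy} e_{xy}. Then for all i < j, L(e_{ij}) = Σ_{x<i} C^{ii}_{xi} e_{xj} + C^{ij}_{ij} e_{ij} + Σ_{y>j} C^{jj}_{jy} e_{iy}. -/

import Mathlib

open Finset

set_option linter.unusedSectionVars false

def e (R : Type*) [CommRing R] {X : Type*} [Preorder X] [DecidableEq X]
    [DecidableRel (α := X) (· ≤ ·)] (x y : X) : IncidenceAlgebra R X :=
  ⟨fun u v => if u = x ∧ v = y ∧ x ≤ y then 1 else 0, fun u v huv => by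
    simp only [ite_eq_right_iff, and_imp]
    rintro rfl rfl h
    exact absurd h huv⟩

section Helpers
variable {R X : Type*} [CommRing R] [Preorder X] [Fintype X] [DecidableEq X]
  [DecidableRel (α := X) (· ≤ ·)] [LocallyFiniteOrder X]

lemma e_apply (x y u v : X) :
    e R x y u v = if u = x ∧ v = y ∧ x ≤ y then 1 else 0 := rfl

lemma mul_e_apply (f : IncidenceAlgebra R X) (a b u v : X) :
    (f * e R a b) u v = if v = b ∧ a ≤ b then f u a else 0 := by
  rw [IncidenceAlgebra.mul_apply]
  split_ifs with h
  · obtain ⟨rfl, hab⟩ := h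
    by_cases hua : u ≤ a
    · rw [Finset.sum_eq_single a]
      · simp [e_apply, hab]
      · intro z hz hza; simp [e_apply, hza]
      · intro h; exact absurd (Finset.mem_Icc.2 ⟨hua, hab⟩) h
    · rw [IncidenceAlgebra.apply_eq_zero_of_not_le hua]
      refine Finset.sum_eq_zero fun z hz => ?_
      rcases eq_or_ne z a with rfl | hza
      · exact absurd (Finset.mem_Icc.1 hz).1 hua
      · simp [e_apply, hza]
  · refine Finset.sum_eq_zero fun z hz => ?_
    push_neg at h
    rcases eq_or_ne z a with rfl | hza
    · rcases eq_or_ne v b with rfl | hvb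
      · simp [e_apply, h rfl]
      · simp [e_apply, hvb]
    · simp [e_apply, hza]

lemma e_mul_apply (f : IncidenceAlgebra R X) (a b u v : X) :
    (e R a b * f) u v = if u = a ∧ a ≤ b then f b v else 0 := by
  rw [IncidenceAlgebra.mul_apply]
  split_ifs with h
  · obtain ⟨rfl, hab⟩ := h
    by_cases hbv : b ≤ v
    · rw [Finset.sum_eq_single b]
      · simp [e_apply, hab]
      · intro z hz hzb; simp [e_apply, hzb]
      · intro h; exact absurd (Finset.mem_Icc.2 ⟨hab, hbv⟩) h
    · rw [IncidenceAlgebra.apply_eq_zero_of_not_le hbv]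
      refine Finset.sum_eq_zero fun z hz => ?_
      rcases eq_or_ne z b with rfl | hzb
      · exact absurd (Finset.mem_Icc.1 hz).2 hbv
      · simp [e_apply, hzb]
  · refine Finset.sum_eq_zero fun z hz => ?_
    push_neg at h
    rcases eq_or_ne u a with rfl | hua
    · rcases eq_or_ne z b with rfl | hzb
      · simp [e_apply, h rfl]
      · simp [e_apply, hzb]
    · simp [e_apply, hua]

lemma ia_sum_apply {ι : Type*} (s : Finset ι) (f : ι → IncidenceAlgebra R X) (a b : X) :
    (∑ k ∈ s, f k) a b = ∑ k ∈ s, f k a b := by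
  classical
  induction s using Finset.cons_induction with
  | empty => rfl
  | cons k s hk ih => rw [Finset.sum_cons, Finset.sum_cons, IncidenceAlgebra.add_apply, ih]

lemma ia_smul_apply (c : R) (f : IncidenceAlgebra R X) (a b : X) :
    (c • f) a b = c * f a b := rfl

end Helpers

/-- Let `X` be a connected finite preordered set, `R` a 2-torsion free commutative ring,
and `L` a Lie derivation of `I(X,R)` with coefficients `C^{ij}_{xy} = L(e_{ij})(x,y)`.
Then for all `i < j`,
`L(e_{ij}) = Σ_{x<i} C^{ii}_{xi} e_{xj} + C^{ij}_{ij} e_{ij} + Σ_{y>j} C^{jj}_{jy} e_{iy}`. -/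
theorem lieDer_apply_e_off_diag {R X : Type*} [CommRing R] [Preorder X]
    [Fintype X] [DecidableEq X] [DecidableRel (α := X) (· ≤ ·)] [LocallyFiniteOrder X]
    (htf : ∀ r : R, r + r = 0 → r = 0)
    (hconn : ∀ x y : X, Relation.ReflTransGen (fun a b : X => a ≤ b ∨ b ≤ a) x y)
    (L : IncidenceAlgebra R X →ₗ[R] IncidenceAlgebra R X)
    (hL : ∀ f g : IncidenceAlgebra R X,
      L (f * g - g * f) = (L f * g - g * L f) + (f * L g - L g * f))
    (i j : X) (hij : i ≤ j) (hne : i ≠ j) :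
    L (e R i j) =
      (∑ x ∈ Finset.univ.filter (fun x : X => x ≤ i ∧ x ≠ i), L (e R i i) x i • e R x j)
        + L (e R i j) i j • e R i j
        + ∑ y ∈ Finset.univ.filter (fun y : X => j ≤ y ∧ y ≠ j), L (e R j j) j y • e R i y := by
  classical
  set A := L (e R i i) with hA
  set B := L (e R i j) with hB
  set D := L (e R j j) with hD
  have hbr1 : e R i i * e R i j - e R i j * e R i i = e R i j := by
    ext u v huv
    rw [IncidenceAlgebra.sub_apply, e_mul_apply, mul_e_apply]
    by_cases hu : u = i <;> by_cases hv : v = j <;>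
      simp [e_apply, hij, hne, hu, hv]
  have hbr2 : e R i j * e R j j - e R j j * e R i j = e R i j := by
    ext u v huv
    rw [IncidenceAlgebra.sub_apply, mul_e_apply, e_mul_apply]
    by_cases hu : u = i <;> by_cases hv : v = j <;>
      simp [e_apply, hij, hne, Ne.symm hne, hu, hv]
  have h1 := hL (e R i i) (e R i j)
  rw [hbr1] at h1
  have h2 := hL (e R i j) (e R j j)
  rw [hbr2] at h2
  ext x y hxy
  have e1 : B x y = ((if y = j ∧ i ≤ j then A x i else 0)
      - (if x = i ∧ i ≤ j then A j y else 0))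
      + ((if x = i ∧ i ≤ i then B i y else 0) - (if y = i ∧ i ≤ i then B x i else 0)) := by
    conv_lhs => rw [hB, h1]
    simp only [IncidenceAlgebra.add_apply, IncidenceAlgebra.sub_apply, mul_e_apply, e_mul_apply]
    rfl
  have e2 : B x y = ((if y = j ∧ j ≤ j then B x j else 0)
      - (if x = j ∧ j ≤ j then B j y else 0))
      + ((if x = i ∧ i ≤ j then D j y else 0) - (if y = j ∧ i ≤ j then D x i else 0)) := by
    conv_lhs => rw [hB, h2]
    simp only [IncidenceAlgebra.add_apply, IncidenceAlgebra.sub_apply, mul_e_apply, e_mul_apply]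
    rfl
  rw [IncidenceAlgebra.add_apply, IncidenceAlgebra.add_apply, ia_sum_apply, ia_sum_apply,
    ia_smul_apply]
  simp only [ia_smul_apply]
  have hS1 : (∑ z ∈ Finset.univ.filter (fun z : X => z ≤ i ∧ z ≠ i), A z i * e R z j x y)
      = if x ≤ i ∧ x ≠ i then A x i * e R x j x y else 0 := by
    by_cases hx : x ≤ i ∧ x ≠ i
    · rw [if_pos hx]
      refine Finset.sum_eq_single x (fun b hb hbx => ?_) (fun hx' => ?_)
      · simp [e_apply, Ne.symm hbx]
      · exact absurd (Finset.mem_filter.2 ⟨Finset.mem_univ x, hx⟩) hx'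
    · rw [if_neg hx]
      refine Finset.sum_eq_zero fun b hb => ?_
      have hb' := (Finset.mem_filter.1 hb).2
      have hbx : x ≠ b := fun h => hx (h ▸ hb')
      simp [e_apply, hbx]
  have hS2 : (∑ z ∈ Finset.univ.filter (fun z : X => j ≤ z ∧ z ≠ j), D j z * e R i z x y)
      = if j ≤ y ∧ y ≠ j then D j y * e R i y x y else 0 := by
    by_cases hy : j ≤ y ∧ y ≠ j
    · rw [if_pos hy]
      refine Finset.sum_eq_single y (fun b hb hby => ?_) (fun hy' => ?_)
      · simp [e_apply, Ne.symm hby]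
      · exact absurd (Finset.mem_filter.2 ⟨Finset.mem_univ y, hy⟩) hy'
    · rw [if_neg hy]
      refine Finset.sum_eq_zero fun b hb => ?_
      have hb' := (Finset.mem_filter.1 hb).2
      have hby : y ≠ b := fun h => hy (h ▸ hb')
      simp [e_apply, hby]
  rw [hS1, hS2]
  by_cases hx : x = i <;> by_cases hy : y = j
  · -- x = i, y = j
    simp [hx, hy, e_apply, hij, hne]
  · -- x = i, y ≠ j
    have hiy : i ≤ y := hx ▸ hxy
    rw [e2]
    by_cases hjy : j ≤ y
    · simp [hx, hy, hne, hij, hjy, hiy, e_apply]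
    · have hD0 : D j y = 0 := IncidenceAlgebra.apply_eq_zero_of_not_le hjy _
      simp [hx, hy, hne, hij, hjy, hD0, e_apply]
  · -- x ≠ i, y = j
    have hxj : x ≤ j := hy ▸ hxy
    rw [e1]
    by_cases hxi : x ≤ i
    · simp [hx, hy, hij, Ne.symm hne, hxi, hxj, e_apply]
    · have hA0 : A x i = 0 := IncidenceAlgebra.apply_eq_zero_of_not_le hxi _
      simp [hx, hy, hij, Ne.symm hne, hxi, hA0, e_apply]
  · -- x ≠ i, y ≠ j
    have hB0 : B x y = 0 := by
      rcases eq_or_ne y i with hyi | hyi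
      · have h0 : B x y = 0 - 0 + (0 - B x y) := by
          conv_lhs => rw [e1]
          simp [hx, hy, hyi, Ne.symm hne, hne]
        exact htf _ (by linear_combination h0)
      · rw [e1]
        simp [hx, hy, hyi]
    rw [hB0]
    simp [e_apply, hx, hy]
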